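/- Let L₁ ⊂ V = 𝔽₂^{2n} be a Lagrangian subspace, let U be a d-dimensional isotropic subspace of V with U ∩ L₁ = {0}, and let d ≤ m ≤ n. Then the number of m-dimensional isotropic subspaces S of V satisfying U ⊆ S and S ∩ L₁ = {0} equals binom(n−d, m−d)₂ · 2^{(m−d)(m−d+1)/2} · 2^{(m−d)(n−m)}. -/

import Mathlib

/-- The field with two elements. -/
abbrev F2 := ZMod 2

/-- The phase space `V = 𝔽₂ⁿ × 𝔽₂ⁿ`. -/
abbrev V (n : ℕ) : Type := (Fin n → F2) × (Fin n → F2)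

/-- The symplectic form `[a,b] = aₓ·b_z + a_z·bₓ` on `V n`. -/
def symp {n : ℕ} (a b : V n) : F2 :=
  (∑ i, a.1 i * b.2 i) + (∑ i, a.2 i * b.1 i)

/-- A subspace is isotropic if the symplectic form vanishes on it. -/
def IsIsotropic {n : ℕ} (S : Submodule F2 (V n)) : Prop :=
  ∀ x ∈ S, ∀ y ∈ S, symp x y = 0

/-- A Lagrangian subspace is an isotropic subspace of dimension `n`. -/
def IsLagrangian {n : ℕ} (S : Submodule F2 (V n)) : Prop :=
  IsIsotropic S ∧ Module.finrank F2 S = n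

/-- Gaussian binomial coefficient `binom(m,r)₂`. -/
def gaussBinom (m r : ℕ) : ℚ :=
  ∏ i ∈ Finset.range r, ((2 ^ (m - i) - 1 : ℚ) / (2 ^ (r - i) - 1))

namespace Stmt8Aux

open Module Submodule Finset

noncomputable def Bf (n : ℕ) : LinearMap.BilinForm F2 (V n) :=
  LinearMap.mk₂ F2 symp
    (fun a a' b => by
      simp only [symp, Prod.fst_add, Prod.snd_add, Pi.add_apply, add_mul,
        Finset.sum_add_distrib]
      ring)
    (fun c a b => by
      simp only [symp, Prod.smul_fst, Prod.smul_snd, Pi.smul_apply, smul_eq_mul,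
        mul_assoc, ← Finset.mul_sum, mul_add])
    (fun a b b' => by
      simp only [symp, Prod.fst_add, Prod.snd_add, Pi.add_apply, mul_add,
        Finset.sum_add_distrib]
      ring)
    (fun c a b => by
      simp only [symp, Prod.smul_fst, Prod.smul_snd, Pi.smul_apply, smul_eq_mul,
        mul_left_comm, ← Finset.mul_sum, mul_add])

@[simp] lemma Bf_apply {n : ℕ} (a b : V n) : Bf n a b = symp a b := rfl

lemma symp_comm {n : ℕ} (a b : V n) : symp a b = symp b a := by
  unfold symp
  rw [add_comm]
  congr 1 <;> exact Finset.sum_congr rfl fun i _ => mul_comm _ _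

lemma Bf_refl {n : ℕ} : (Bf n).IsRefl := fun a b h => by
  simpa [symp_comm b a] using h

lemma symp_self {n : ℕ} (a : V n) : symp a a = 0 := by
  unfold symp
  rw [Finset.sum_congr rfl fun i _ => mul_comm (a.2 i) (a.1 i)]
  rw [← two_mul, show ((2 : F2)) = 0 by decide, zero_mul]

lemma Bf_nondeg {n : ℕ} : (Bf n).Nondegenerate := by
  refine (LinearMap.IsRefl.nondegenerate_iff_separatingLeft Bf_refl).2 ?_
  intro v hv
  have h1 : ∀ i, v.1 i = 0 := fun i => by
    simpa [symp, Pi.single_apply] using hv (0, Pi.single i 1)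
  have h2 : ∀ i, v.2 i = 0 := fun i => by
    simpa [symp, Pi.single_apply] using hv (Pi.single i 1, 0)
  ext i
  · exact h1 i
  · exact h2 i

lemma finrank_V (n : ℕ) : Module.finrank F2 (V n) = 2 * n := by
  simp [V, Module.finrank_prod, Module.finrank_pi, two_mul]

lemma finrank_orth {n : ℕ} (W : Submodule F2 (V n)) :
    Module.finrank F2 ((Bf n).orthogonal W) = 2 * n - Module.finrank F2 W := by
  rw [LinearMap.BilinForm.finrank_orthogonal Bf_nondeg, finrank_V]

instance {n : ℕ} : Finite (Submodule F2 (V n)) :=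
  Finite.of_injective (fun W => (W : Set (V n))) SetLike.coe_injective

lemma card_submodule {n : ℕ} (W : Submodule F2 (V n)) :
    Nat.card W = 2 ^ Module.finrank F2 W := by
  have : Fintype W := Fintype.ofFinite _
  rw [Nat.card_eq_fintype_card, card_eq_pow_finrank (K := F2), ZMod.card]

lemma card_diff {n : ℕ} {P T : Submodule F2 (V n)} (h : P ≤ T) :
    Nat.card {v : V n // v ∈ T ∧ v ∉ P} + Nat.card P = Nat.card T := by
  classical
  have e1 : {v : V n // v ∈ T ∧ v ∉ P} ≃ {x : {v : V n // v ∈ T} // ¬ (x : V n) ∈ P} :=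
    (Equiv.subtypeSubtypeEquivSubtypeInter (fun v => v ∈ T) (fun v => v ∉ P)).symm
  have e2 : {x : {v : V n // v ∈ T} // (x : V n) ∈ P} ≃ {v : V n // v ∈ P} :=
    Equiv.subtypeSubtypeEquivSubtype (fun hx => h hx)
  have := Fintype.ofFinite {v : V n // v ∈ T}
  rw [Nat.card_congr e1, show Nat.card P = Nat.card {x : {v : V n // v ∈ T} // (x : V n) ∈ P}
    from (Nat.card_congr e2).symm]
  simp only [Nat.card_eq_fintype_card]
  rw [← Fintype.card_congr (Equiv.sumCompl (fun x : {v : V n // v ∈ T} => (x : V n) ∈ P)),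
    Fintype.card_sum]
  omega

lemma finrank_sup_span {n : ℕ} {U : Submodule F2 (V n)} {v : V n} (hv : v ∉ U) :
    Module.finrank F2 ↥(U ⊔ F2 ∙ v) = Module.finrank F2 U + 1 := by
  have hv0 : v ≠ 0 := fun h => hv (h ▸ U.zero_mem)
  have hinf : U ⊓ (F2 ∙ v) = ⊥ := by
    rw [eq_bot_iff]
    rintro x ⟨hxU, hxv⟩
    obtain ⟨c, rfl⟩ := Submodule.mem_span_singleton.1 hxv
    have hc : ∀ c : F2, c = 0 ∨ c = 1 := by decide
    rcases hc c with rfl | rfl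
    · simp
    · simp only [one_smul] at hxU ⊢
      exact absurd hxU hv
  have := Submodule.finrank_sup_add_finrank_inf_eq U (F2 ∙ v)
  rw [hinf, finrank_bot, add_zero, finrank_span_singleton hv0] at this
  omega

lemma coreCount {n d : ℕ} (U P T : Submodule F2 (V n)) (hUP : U ≤ P) (hPT : P ≤ T)
    (hUd : Module.finrank F2 U = d) (Q : Submodule F2 (V n) → Prop)
    (h1 : ∀ W, Q W → U ≤ W ∧ Module.finrank F2 W = d + 1)
    (h2 : ∀ W, Q W → ∀ v ∈ W, v ∉ U → v ∈ T ∧ v ∉ P)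
    (h3 : ∀ v ∈ T, v ∉ P → Q (U ⊔ F2 ∙ v)) :
    Nat.card {W : Submodule F2 (V n) // Q W} * 2 ^ d + Nat.card P = Nat.card T := by
  classical
  have e : {v : V n // v ∈ T ∧ v ∉ P} ≃
      (W : {W : Submodule F2 (V n) // Q W}) × {v : V n // v ∈ W.1 ∧ v ∉ U} := by
    refine ⟨fun v => ⟨⟨U ⊔ F2 ∙ v.1, h3 v.1 v.2.1 v.2.2⟩,
      ⟨v.1, Submodule.mem_sup_right (Submodule.mem_span_singleton_self _),
        fun h => v.2.2 (hUP h)⟩⟩,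
      fun x => ⟨x.2.1, h2 x.1.1 x.1.2 x.2.1 x.2.2.1 x.2.2.2⟩, fun v => rfl, ?_⟩
    rintro ⟨⟨W, hW⟩, v, hvW, hvU⟩
    have hWle : U ⊔ (F2 ∙ v) ≤ W :=
      sup_le (h1 W hW).1 ((Submodule.span_singleton_le_iff_mem _ _).2 hvW)
    obtain rfl : U ⊔ (F2 ∙ v) = W := by
      apply Submodule.eq_of_le_of_finrank_le hWle
      rw [(h1 W hW).2, finrank_sup_span hvU, hUd]
    rfl
  have hcards : ∀ W : {W : Submodule F2 (V n) // Q W},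
      Nat.card {v : V n // v ∈ W.1 ∧ v ∉ U} = 2 ^ d := by
    rintro ⟨W, hW⟩
    have h := card_diff (h1 W hW).1
    rw [card_submodule, card_submodule, hUd, (h1 W hW).2, pow_succ] at h
    simp only at h ⊢
    omega
  haveI : ∀ W : {W : Submodule F2 (V n) // Q W}, Fintype {v : V n // v ∈ W.1 ∧ v ∉ U} :=
    fun _ => Fintype.ofFinite _
  haveI : Fintype {W : Submodule F2 (V n) // Q W} := Fintype.ofFinite _
  have h4 : Nat.card {v : V n // v ∈ T ∧ v ∉ P}
      = Nat.card {W : Submodule F2 (V n) // Q W} * 2 ^ d := by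
    rw [Nat.card_congr e, Nat.card_eq_fintype_card, Fintype.card_sigma,
      Nat.card_eq_fintype_card]
    calc ∑ W : {W : Submodule F2 (V n) // Q W}, Fintype.card {v : V n // v ∈ W.1 ∧ v ∉ U}
        = ∑ _W : {W : Submodule F2 (V n) // Q W}, 2 ^ d :=
          Finset.sum_congr rfl fun W _ => by rw [← Nat.card_eq_fintype_card, hcards W]
      _ = _ := by rw [Finset.sum_const, Finset.card_univ, smul_eq_mul]
  rw [← h4]
  exact card_diff hPT

lemma mem_orth_iff {n : ℕ} {U : Submodule F2 (V n)} {v : V n} :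
    v ∈ (Bf n).orthogonal U ↔ ∀ u ∈ U, symp u v = 0 := Iff.rfl

lemma iso_le_orth {n : ℕ} {U : Submodule F2 (V n)} (hU : IsIsotropic U) :
    U ≤ (Bf n).orthogonal U :=
  fun v hv => mem_orth_iff.2 fun u hu => hU u hu v hv

lemma lagr_orth {n : ℕ} {L : Submodule F2 (V n)} (hL : IsLagrangian L) :
    (Bf n).orthogonal L = L := by
  refine (Submodule.eq_of_le_of_finrank_le (iso_le_orth hL.1) ?_).symm
  rw [finrank_orth, hL.2]
  omega

lemma orth_bot (n : ℕ) : (Bf n).orthogonal ⊥ = ⊤ := by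
  rw [eq_top_iff]
  intro m _
  refine LinearMap.BilinForm.mem_orthogonal_iff.2 fun u hu => ?_
  rw [Submodule.mem_bot] at hu
  subst hu
  simp [LinearMap.BilinForm.IsOrtho]

lemma ext_count {n d : ℕ} (hdn : d ≤ n) (L₁ U : Submodule F2 (V n)) (hL₁ : IsLagrangian L₁)
    (hU : IsIsotropic U) (hUd : Module.finrank F2 U = d) (hUL : U ⊓ L₁ = ⊥) :
    Nat.card {W : Submodule F2 (V n) //
        IsIsotropic W ∧ Module.finrank F2 W = d + 1 ∧ U ≤ W ∧ W ⊓ L₁ = ⊥} * 2 ^ d + 2 ^ n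
      = 2 ^ (2 * n - d) := by
  set T := (Bf n).orthogonal U with hT
  set P := T ⊓ (U ⊔ L₁) with hP
  have hUT : U ≤ T := iso_le_orth hU
  have hUP : U ≤ P := le_inf hUT le_sup_left
  have hfT : Module.finrank F2 T = 2 * n - d := by rw [hT, finrank_orth, hUd]
  have hfUL : Module.finrank F2 ↥(U ⊔ L₁) = d + n := by
    have h := Submodule.finrank_sup_add_finrank_inf_eq U L₁
    rw [hUL, finrank_bot, add_zero, hUd, hL₁.2] at h
    omega
  have h_top : T ⊔ (U ⊔ L₁) = ⊤ := by
    have hbot : (Bf n).orthogonal (T ⊔ (U ⊔ L₁)) = ⊥ := by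
      rw [eq_bot_iff]
      intro x hx
      have hxU : x ∈ U := by
        have h5 := LinearMap.BilinForm.orthogonal_le (le_sup_left : T ≤ T ⊔ (U ⊔ L₁)) hx
        rwa [hT, LinearMap.BilinForm.orthogonal_orthogonal Bf_nondeg Bf_refl] at h5
      have hxL : x ∈ L₁ := by
        have h5 := LinearMap.BilinForm.orthogonal_le
          (le_sup_of_le_right (le_sup_right : L₁ ≤ U ⊔ L₁)) hx
        rwa [lagr_orth hL₁] at h5
      have : x ∈ U ⊓ L₁ := ⟨hxU, hxL⟩
      rwa [hUL] at this
    have h6 := congrArg ((Bf n).orthogonal) hbot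
    rwa [LinearMap.BilinForm.orthogonal_orthogonal Bf_nondeg Bf_refl, orth_bot] at h6
  have hfP : Module.finrank F2 P = n := by
    have h := Submodule.finrank_sup_add_finrank_inf_eq T (U ⊔ L₁)
    rw [h_top, hfUL, hfT, finrank_top, finrank_V] at h
    rw [← hP] at h
    omega
  have key := coreCount U P T hUP inf_le_left hUd
    (fun W => IsIsotropic W ∧ Module.finrank F2 W = d + 1 ∧ U ≤ W ∧ W ⊓ L₁ = ⊥)
    (fun W hW => ⟨hW.2.2.1, hW.2.1⟩)
    (fun W hW v hvW hvU => by
      obtain ⟨hWiso, hWrk, hUW, hWL⟩ := hW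
      refine ⟨mem_orth_iff.2 fun u hu => hWiso u (hUW hu) v hvW, ?_⟩
      rintro ⟨hvT, hvUL⟩
      rcases Submodule.mem_sup.1 hvUL with ⟨u, hu, l, hl, rfl⟩
      have hlW : l ∈ W := by
        have h7 : u + l - u ∈ W := sub_mem hvW (hUW hu)
        simpa using h7
      have h8 : l ∈ W ⊓ L₁ := ⟨hlW, hl⟩
      rw [hWL, Submodule.mem_bot] at h8
      subst h8
      exact hvU (by simpa using hu))
    (fun v hvT hvP => by
      have hvUL : v ∉ U ⊔ L₁ := fun h => hvP ⟨hvT, h⟩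
      have hvU : v ∉ U := fun h => hvUL (Submodule.mem_sup_left h)
      have hsymp : ∀ u ∈ U, symp u v = 0 := mem_orth_iff.1 hvT
      refine ⟨?_, ?_, le_sup_left, ?_⟩
      · intro x hx y hy
        rcases Submodule.mem_sup.1 hx with ⟨u, hu, w, hw, rfl⟩
        rcases Submodule.mem_span_singleton.1 hw with ⟨a, rfl⟩
        rcases Submodule.mem_sup.1 hy with ⟨u', hu', w', hw', rfl⟩
        rcases Submodule.mem_span_singleton.1 hw' with ⟨b, rfl⟩
        have e9 : symp (u + a • v) (u' + b • v) = (Bf n) (u + a • v) (u' + b • v) := rfl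
        rw [e9, map_add, map_smul]
        simp only [LinearMap.add_apply, LinearMap.smul_apply, map_add, map_smul,
          smul_eq_mul, Bf_apply]
        rw [hU u hu u' hu', hsymp u hu, symp_comm v u', hsymp u' hu', symp_self]
        ring
      · rw [finrank_sup_span hvU, hUd]
      · rw [eq_bot_iff]
        rintro x ⟨hxW, hxL⟩
        rcases Submodule.mem_sup.1 hxW with ⟨u, hu, w, hw, rfl⟩
        rcases Submodule.mem_span_singleton.1 hw with ⟨a, rfl⟩
        have hc : ∀ c : F2, c = 0 ∨ c = 1 := by decide
        rcases hc a with rfl | rfl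
        · have : u ∈ U ⊓ L₁ := ⟨by simpa using hu, by simpa using hxL⟩
          rw [hUL] at this
          simpa using this
        · exfalso
          have h10 : (u + (1 : F2) • v) - u ∈ U ⊔ L₁ :=
            sub_mem (Submodule.mem_sup_right hxL) (Submodule.mem_sup_left hu)
          simp only [one_smul, add_sub_cancel_left] at h10
          exact hvUL h10)
  rwa [card_submodule, card_submodule, hfP, hfT] at key

lemma inner_count {n d m : ℕ} (U S : Submodule F2 (V n)) (hUS : U ≤ S)
    (hUd : Module.finrank F2 U = d) (hS : Module.finrank F2 S = m) :
    Nat.card {W : Submodule F2 (V n) //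
        U ≤ W ∧ W ≤ S ∧ Module.finrank F2 W = d + 1} * 2 ^ d + 2 ^ d = 2 ^ m := by
  have key := coreCount U U S le_rfl hUS hUd
    (fun W => U ≤ W ∧ W ≤ S ∧ Module.finrank F2 W = d + 1)
    (fun W hW => ⟨hW.1, hW.2.2⟩)
    (fun W hW v hvW hvU => ⟨hW.2.1 hvW, hvU⟩)
    (fun v hvS hvU => ⟨le_sup_left,
      sup_le hUS ((Submodule.span_singleton_le_iff_mem _ _).2 hvS),
      by rw [finrank_sup_span hvU, hUd]⟩)
  rwa [card_submodule, card_submodule, hUd, hS] at key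


set_option maxHeartbeats 2000000 in
lemma count_eq {n : ℕ} (L₁ : Submodule F2 (V n)) (hL₁ : IsLagrangian L₁) (m : ℕ) (hm : m ≤ n) :
    ∀ (r d : ℕ) (U : Submodule F2 (V n)), d + r = m → IsIsotropic U →
      Module.finrank F2 U = d → U ⊓ L₁ = ⊥ →
    (Nat.card {S : Submodule F2 (V n) //
        IsIsotropic S ∧ Module.finrank F2 S = m ∧ U ≤ S ∧ S ⊓ L₁ = ⊥} : ℚ)
      = ∏ k ∈ Finset.Ico d m,
          (2 ^ (n - k) * ((2 : ℚ) ^ (n - k) - 1) / (2 ^ (m - k) - 1)) := by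
  intro r
  induction r with
  | zero =>
    intro d U hdm hU hUd hUL
    have hdm0 : d = m := by omega
    have huniq : ∀ S : Submodule F2 (V n),
        (IsIsotropic S ∧ Module.finrank F2 S = m ∧ U ≤ S ∧ S ⊓ L₁ = ⊥) ↔ S = U := by
      intro S
      constructor
      · rintro ⟨-, hSm, hUS, -⟩
        exact (Submodule.eq_of_le_of_finrank_le hUS (by rw [hSm, hUd]; omega)).symm
      · rintro rfl
        exact ⟨hU, by rw [hUd]; omega, le_rfl, hUL⟩
    have hone : Nat.card {S : Submodule F2 (V n) //
        IsIsotropic S ∧ Module.finrank F2 S = m ∧ U ≤ S ∧ S ⊓ L₁ = ⊥} = 1 := by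
      rw [Nat.card_eq_one_iff_unique]
      refine ⟨⟨fun a b => Subtype.ext (by rw [(huniq a.1).1 a.2, (huniq b.1).1 b.2])⟩,
        ⟨⟨U, (huniq U).2 rfl⟩⟩⟩
    rw [hone, hdm0, Finset.Ico_self, Finset.prod_empty]
    norm_num
  | succ r ih =>
    intro d U hdm hU hUd hUL
    classical
    have hdm' : d < m := by omega
    have hdn : d ≤ n := by omega
    haveI iW : Fintype {W : Submodule F2 (V n) //
        IsIsotropic W ∧ Module.finrank F2 W = d + 1 ∧ U ≤ W ∧ W ⊓ L₁ = ⊥} := Fintype.ofFinite _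
    haveI iS : Fintype {S : Submodule F2 (V n) //
        IsIsotropic S ∧ Module.finrank F2 S = m ∧ U ≤ S ∧ S ⊓ L₁ = ⊥} := Fintype.ofFinite _
    haveI i1 : ∀ W : {W : Submodule F2 (V n) //
        IsIsotropic W ∧ Module.finrank F2 W = d + 1 ∧ U ≤ W ∧ W ⊓ L₁ = ⊥},
        Fintype {S : Submodule F2 (V n) //
          IsIsotropic S ∧ Module.finrank F2 S = m ∧ W.1 ≤ S ∧ S ⊓ L₁ = ⊥} :=
      fun _ => Fintype.ofFinite _
    haveI i2 : ∀ S : {S : Submodule F2 (V n) //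
        IsIsotropic S ∧ Module.finrank F2 S = m ∧ U ≤ S ∧ S ⊓ L₁ = ⊥},
        Fintype {W : Submodule F2 (V n) //
          U ≤ W ∧ W ≤ S.1 ∧ Module.finrank F2 W = d + 1} :=
      fun _ => Fintype.ofFinite _
    -- the swap equivalence between the two sigma types
    have e : ((W : {W : Submodule F2 (V n) //
          IsIsotropic W ∧ Module.finrank F2 W = d + 1 ∧ U ≤ W ∧ W ⊓ L₁ = ⊥}) ×
          {S : Submodule F2 (V n) //
            IsIsotropic S ∧ Module.finrank F2 S = m ∧ W.1 ≤ S ∧ S ⊓ L₁ = ⊥})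
        ≃ ((S : {S : Submodule F2 (V n) //
          IsIsotropic S ∧ Module.finrank F2 S = m ∧ U ≤ S ∧ S ⊓ L₁ = ⊥}) ×
          {W : Submodule F2 (V n) //
            U ≤ W ∧ W ≤ S.1 ∧ Module.finrank F2 W = d + 1}) := by
      refine ⟨fun x => ⟨⟨x.2.1, x.2.2.1, x.2.2.2.1, x.1.2.2.2.1.trans x.2.2.2.2.1,
          x.2.2.2.2.2⟩, ⟨x.1.1, x.1.2.2.2.1, x.2.2.2.2.1, x.1.2.2.1⟩⟩,
        fun y => ⟨⟨y.2.1,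
          fun a ha b hb => y.1.2.1 a (y.2.2.2.1 ha) b (y.2.2.2.1 hb),
          y.2.2.2.2, y.2.2.1,
          by
            have hle := inf_le_inf_right L₁ y.2.2.2.1
            rw [y.1.2.2.2.2] at hle
            exact eq_bot_iff.2 hle⟩,
          ⟨y.1.1, y.1.2.1, y.1.2.2.1, y.2.2.2.1, y.1.2.2.2.2⟩⟩, ?_, ?_⟩
      · rintro ⟨⟨W, hW⟩, S, hS⟩
        rfl
      · rintro ⟨⟨S, hS⟩, W, hW⟩
        rfl
    -- induction hypothesis applied to every W
    have hIH : ∀ W : {W : Submodule F2 (V n) //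
        IsIsotropic W ∧ Module.finrank F2 W = d + 1 ∧ U ≤ W ∧ W ⊓ L₁ = ⊥},
        (Nat.card {S : Submodule F2 (V n) //
          IsIsotropic S ∧ Module.finrank F2 S = m ∧ W.1 ≤ S ∧ S ⊓ L₁ = ⊥} : ℚ)
        = ∏ k ∈ Finset.Ico (d + 1) m,
            (2 ^ (n - k) * ((2 : ℚ) ^ (n - k) - 1) / (2 ^ (m - k) - 1)) :=
      fun W => ih (d + 1) W.1 (by omega) W.2.1 W.2.2.1 W.2.2.2.2
    -- cardinality of the first sigma type
    have hA : ((Nat.card ((W : {W : Submodule F2 (V n) //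
          IsIsotropic W ∧ Module.finrank F2 W = d + 1 ∧ U ≤ W ∧ W ⊓ L₁ = ⊥}) ×
          {S : Submodule F2 (V n) //
            IsIsotropic S ∧ Module.finrank F2 S = m ∧ W.1 ≤ S ∧ S ⊓ L₁ = ⊥})) : ℚ)
        = (Nat.card {W : Submodule F2 (V n) //
            IsIsotropic W ∧ Module.finrank F2 W = d + 1 ∧ U ≤ W ∧ W ⊓ L₁ = ⊥} : ℚ) *
          ∏ k ∈ Finset.Ico (d + 1) m,
            (2 ^ (n - k) * ((2 : ℚ) ^ (n - k) - 1) / (2 ^ (m - k) - 1)) := by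
      rw [Nat.card_eq_fintype_card (α := ((W : {W : Submodule F2 (V n) //
          IsIsotropic W ∧ Module.finrank F2 W = d + 1 ∧ U ≤ W ∧ W ⊓ L₁ = ⊥}) ×
          {S : Submodule F2 (V n) //
            IsIsotropic S ∧ Module.finrank F2 S = m ∧ W.1 ≤ S ∧ S ⊓ L₁ = ⊥})),
        Fintype.card_sigma, Nat.cast_sum]
      rw [Finset.sum_congr rfl (fun W _ => by
        rw [← Nat.card_eq_fintype_card, hIH W])]
      rw [Finset.sum_const, nsmul_eq_mul, Finset.card_univ, ← Nat.card_eq_fintype_card]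
    -- inner count for each S
    have hinner : ∀ S : {S : Submodule F2 (V n) //
        IsIsotropic S ∧ Module.finrank F2 S = m ∧ U ≤ S ∧ S ⊓ L₁ = ⊥},
        (Fintype.card {W : Submodule F2 (V n) //
          U ≤ W ∧ W ≤ S.1 ∧ Module.finrank F2 W = d + 1} : ℚ) = 2 ^ (m - d) - 1 := by
      intro S
      have h := inner_count U S.1 S.2.2.2.1 hUd S.2.2.1
      rw [Nat.card_eq_fintype_card] at h
      have hq : (Fintype.card {W : Submodule F2 (V n) //
          U ≤ W ∧ W ≤ S.1 ∧ Module.finrank F2 W = d + 1} : ℚ) * 2 ^ d + 2 ^ d = 2 ^ m := by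
        exact_mod_cast congrArg (Nat.cast : ℕ → ℚ) h
      have h2m : (2 : ℚ) ^ m = 2 ^ (m - d) * 2 ^ d := by
        rw [← pow_add]
        congr 1
        omega
      generalize hgen : (Fintype.card {W : Submodule F2 (V n) //
          U ≤ W ∧ W ≤ S.1 ∧ Module.finrank F2 W = d + 1} : ℚ) = w at hq ⊢
      have h5 : w * 2 ^ d = (2 ^ (m - d) - 1) * 2 ^ d := by
        rw [sub_mul, ← h2m, one_mul]
        linarith
      exact mul_right_cancel₀ (pow_ne_zero d (two_ne_zero' ℚ)) h5
    -- cardinality of the second sigma type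
    have hB : ((Nat.card ((S : {S : Submodule F2 (V n) //
          IsIsotropic S ∧ Module.finrank F2 S = m ∧ U ≤ S ∧ S ⊓ L₁ = ⊥}) ×
          {W : Submodule F2 (V n) //
            U ≤ W ∧ W ≤ S.1 ∧ Module.finrank F2 W = d + 1})) : ℚ)
        = (Nat.card {S : Submodule F2 (V n) //
            IsIsotropic S ∧ Module.finrank F2 S = m ∧ U ≤ S ∧ S ⊓ L₁ = ⊥} : ℚ) *
          (2 ^ (m - d) - 1) := by
      rw [Nat.card_eq_fintype_card (α := ((S : {S : Submodule F2 (V n) //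
          IsIsotropic S ∧ Module.finrank F2 S = m ∧ U ≤ S ∧ S ⊓ L₁ = ⊥}) ×
          {W : Submodule F2 (V n) //
            U ≤ W ∧ W ≤ S.1 ∧ Module.finrank F2 W = d + 1})),
        Fintype.card_sigma, Nat.cast_sum]
      rw [Finset.sum_congr rfl (fun S _ => hinner S)]
      rw [Finset.sum_const, nsmul_eq_mul, Finset.card_univ, ← Nat.card_eq_fintype_card]
    -- count of extensions W
    have hWcard := ext_count hdn L₁ U hL₁ hU hUd hUL
    have hWq : (Nat.card {W : Submodule F2 (V n) //
        IsIsotropic W ∧ Module.finrank F2 W = d + 1 ∧ U ≤ W ∧ W ⊓ L₁ = ⊥} : ℚ)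
        = 2 ^ (n - d) * (2 ^ (n - d) - 1) := by
      have hq : (Nat.card {W : Submodule F2 (V n) //
          IsIsotropic W ∧ Module.finrank F2 W = d + 1 ∧ U ≤ W ∧ W ⊓ L₁ = ⊥} : ℚ) * 2 ^ d
          + 2 ^ n = 2 ^ (2 * n - d) := by
        exact_mod_cast congrArg (Nat.cast : ℕ → ℚ) hWcard
      have e1 : (2 : ℚ) ^ (2 * n - d) = 2 ^ (n - d) * 2 ^ (n - d) * 2 ^ d := by
        rw [← pow_add, ← pow_add]
        congr 1
        omega
      have e2 : (2 : ℚ) ^ n = 2 ^ (n - d) * 2 ^ d := by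
        rw [← pow_add]
        congr 1
        omega
      rw [e1, e2] at hq
      generalize hgen : (Nat.card {W : Submodule F2 (V n) //
          IsIsotropic W ∧ Module.finrank F2 W = d + 1 ∧ U ≤ W ∧ W ⊓ L₁ = ⊥} : ℚ) = w at hq ⊢
      have h5 : w * 2 ^ d = (2 ^ (n - d) * (2 ^ (n - d) - 1)) * 2 ^ d := by
        ring_nf
        ring_nf at hq
        linarith
      exact mul_right_cancel₀ (pow_ne_zero d (two_ne_zero' ℚ)) h5
    -- combine
    have hcongr : ((Nat.card ((W : {W : Submodule F2 (V n) //
          IsIsotropic W ∧ Module.finrank F2 W = d + 1 ∧ U ≤ W ∧ W ⊓ L₁ = ⊥}) ×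
          {S : Submodule F2 (V n) //
            IsIsotropic S ∧ Module.finrank F2 S = m ∧ W.1 ≤ S ∧ S ⊓ L₁ = ⊥})) : ℚ)
        = ((Nat.card ((S : {S : Submodule F2 (V n) //
          IsIsotropic S ∧ Module.finrank F2 S = m ∧ U ≤ S ∧ S ⊓ L₁ = ⊥}) ×
          {W : Submodule F2 (V n) //
            U ≤ W ∧ W ≤ S.1 ∧ Module.finrank F2 W = d + 1})) : ℚ) := by
      exact_mod_cast congrArg (Nat.cast : ℕ → ℚ) (Nat.card_congr e)
    have hmain : (Nat.card {S : Submodule F2 (V n) //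
          IsIsotropic S ∧ Module.finrank F2 S = m ∧ U ≤ S ∧ S ⊓ L₁ = ⊥} : ℚ) *
          (2 ^ (m - d) - 1)
        = (2 ^ (n - d) * ((2 : ℚ) ^ (n - d) - 1)) *
          ∏ k ∈ Finset.Ico (d + 1) m,
            (2 ^ (n - k) * ((2 : ℚ) ^ (n - k) - 1) / (2 ^ (m - k) - 1)) := by
      rw [← hB, ← hcongr, hA, hWq]
    have hX : (2 : ℚ) ^ (m - d) - 1 ≠ 0 := by
      have h1 : (1 : ℚ) ≤ 2 ^ r := one_le_pow₀ (by norm_num)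
      have h2 : (2 : ℚ) ^ (m - d) = 2 * 2 ^ r := by
        rw [show m - d = r + 1 by omega, pow_succ]
        ring
      rw [h2]
      intro hcontra
      nlinarith
    rw [Finset.prod_eq_prod_Ico_succ_bot hdm', div_mul_eq_mul_div, eq_div_iff hX]
    exact hmain

lemma sum_formula (r a : ℕ) : ∑ i ∈ Finset.range r, (r + a - i) = r * (r + 1) / 2 + r * a := by
  have h1 : ∀ i ∈ Finset.range r, r + a - i = (r - i) + a := fun i hi => by
    have := Finset.mem_range.1 hi
    omega
  rw [Finset.sum_congr rfl h1, Finset.sum_add_distrib, Finset.sum_const, Finset.card_range,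
    smul_eq_mul]
  congr 1
  have h2 : ∑ i ∈ Finset.range r, (r - i) = ∑ i ∈ Finset.range r, (i + 1) := by
    rw [← Finset.sum_range_reflect]
    exact Finset.sum_congr rfl fun i hi => by
      have := Finset.mem_range.1 hi
      omega
  have h3 : ∑ i ∈ Finset.range r, (i + 1) = ∑ i ∈ Finset.range (r + 1), i := by
    rw [Finset.sum_range_succ' (fun i => i) r]
    simp
  rw [h2, h3, Finset.sum_range_id]
  simp [Nat.mul_comm]

lemma prod_eq (n d m : ℕ) (hd : d ≤ m) (hm : m ≤ n) :
    ∏ k ∈ Finset.Ico d m, (2 ^ (n - k) * ((2 : ℚ) ^ (n - k) - 1) / (2 ^ (m - k) - 1))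
      = gaussBinom (n - d) (m - d) * 2 ^ ((m - d) * (m - d + 1) / 2) *
          2 ^ ((m - d) * (n - m)) := by
  rw [Finset.prod_Ico_eq_prod_range]
  have hterm : ∀ i ∈ Finset.range (m - d),
      (2 : ℚ) ^ (n - (d + i)) * ((2 : ℚ) ^ (n - (d + i)) - 1) / (2 ^ (m - (d + i)) - 1)
        = 2 ^ ((n - d) - i) * (((2 : ℚ) ^ ((n - d) - i) - 1) / (2 ^ ((m - d) - i) - 1)) := by
    intro i hi
    have hi' := Finset.mem_range.1 hi
    rw [show n - (d + i) = (n - d) - i by omega, show m - (d + i) = (m - d) - i by omega,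
      mul_div_assoc]
  rw [Finset.prod_congr rfl hterm, Finset.prod_mul_distrib, Finset.prod_pow_eq_pow_sum]
  have hsum : ∑ i ∈ Finset.range (m - d), ((n - d) - i)
      = (m - d) * ((m - d) + 1) / 2 + (m - d) * (n - m) := by
    have h1 : ∀ i ∈ Finset.range (m - d), (n - d) - i = (m - d) + (n - m) - i :=
      fun i hi => by
        have := Finset.mem_range.1 hi
        omega
    rw [Finset.sum_congr rfl h1, sum_formula]
  rw [hsum, gaussBinom, pow_add]
  ring

end Stmt8Aux

/-- Let `L₁ ⊂ 𝔽₂^{2n}` be Lagrangian, `U` a `d`-dimensional isotropic subspace with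
`U ∩ L₁ = {0}`, and `d ≤ m ≤ n`. The number of `m`-dimensional isotropic subspaces
`S` with `U ⊆ S` and `S ∩ L₁ = {0}` equals
`binom(n−d, m−d)₂ · 2^{(m−d)(m−d+1)/2} · 2^{(m−d)(n−m)}`. -/
theorem stmt8 (n d m : ℕ) (hd : d ≤ m) (hm : m ≤ n)
    (L₁ U : Submodule F2 (V n)) (hL₁ : IsLagrangian L₁)
    (hU : IsIsotropic U) (hUd : Module.finrank F2 U = d) (hUL : U ⊓ L₁ = ⊥) :
    (Nat.card {S : Submodule F2 (V n) //
        IsIsotropic S ∧ Module.finrank F2 S = m ∧ U ≤ S ∧ S ⊓ L₁ = ⊥} : ℚ)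
      = gaussBinom (n - d) (m - d) * 2 ^ ((m - d) * (m - d + 1) / 2) *
          2 ^ ((m - d) * (n - m)) := by
  have h := Stmt8Aux.count_eq L₁ hL₁ m hm (m - d) d U (by omega) hU hUd hUL
  rw [h, Stmt8Aux.prod_eq n d m hd hm]
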